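/- arXiv:1408.2325 — 2 statements merged into one kernel-verified Lean document; each statement's English description precedes it below -/
import Mathlib

section
/- There exists a group G that is finitely presented, infinite, and has no nontrivial finite quotients; that is, for every finite group Q, every group homomorphism f : G → Q is trivial (f(g) = 1 for all g ∈ G). -/
open Monoid

namespace WiseAux



lemma conj_pow {Q : Type*} [Group Q] {α β : Q} (h : β⁻¹ * α * β = α * α) (k : ℕ) :
    β⁻¹ ^ k * α * β ^ k = α ^ 2 ^ k := by
  induction k with
  | zero => simp
  | succ k ih =>
    have h1 : β⁻¹ ^ (k+1) * α * β ^ (k+1) = β⁻¹ ^ k * (β⁻¹ * α * β) * β ^ k := by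
      rw [pow_succ, pow_succ']; group
    rw [h1, h]
    have h2 : β⁻¹ ^ k * (α * α) * β ^ k = (β⁻¹ ^ k * α * β ^ k) * (β⁻¹ ^ k * α * β ^ k) := by
      group
    have h3 : 2 ^ (k+1) = 2 ^ k + 2 ^ k := by rw [pow_succ, mul_two]
    rw [h2, ih, ← pow_add, h3]

lemma order_dvd {Q : Type*} [Group Q] [Finite Q] {α β : Q} (h : β⁻¹ * α * β = α * α) :
    orderOf α ∣ 2 ^ orderOf β - 1 := by
  have h2 := conj_pow h (orderOf β)
  rw [inv_pow, pow_orderOf_eq_one, inv_one, one_mul, mul_one] at h2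
  apply orderOf_dvd_of_pow_eq_one
  have hle : 1 ≤ 2 ^ orderOf β := Nat.one_le_two_pow
  have h7 : α ^ (2 ^ orderOf β - 1) * α = 1 * α := by
    rw [← pow_succ, Nat.sub_add_cancel hle, ← h2, one_mul]
  exact mul_right_cancel h7

lemma higman_finite {Q : Type*} [Group Q] [Finite Q] (α : Fin 4 → Q)
    (h : ∀ i : Fin 4, (α (i+1))⁻¹ * α i * (α (i+1)) = α i * α i) : ∀ i, α i = 1 := by
  set n : Fin 4 → ℕ := fun i => orderOf (α i) with hn
  set N : ℕ := n 0 * n 1 * n 2 * n 3 with hN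
  have h0 : n 0 ∣ N := ⟨n 1 * n 2 * n 3, by ring⟩
  have h1' : n 1 ∣ N := ⟨n 0 * n 2 * n 3, by ring⟩
  have h2' : n 2 ∣ N := ⟨n 0 * n 1 * n 3, by ring⟩
  have h3' : n 3 ∣ N := ⟨n 0 * n 1 * n 2, by ring⟩
  have hnN : ∀ j : Fin 4, n j ∣ N := by
    intro j; fin_cases j
    exacts [h0, h1', h2', h3']
  have hd : ∀ i : Fin 4, n i ∣ 2 ^ n (i+1) - 1 := fun i => order_dvd (h i)
  have hN1 : N = 1 := by
    by_contra hN1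
    have hpp : N.minFac.Prime := Nat.minFac_prime hN1
    set p := N.minFac with hp
    haveI := Fact.mk hpp
    have hpN : p ∣ N := Nat.minFac_dvd N
    have : ∃ i : Fin 4, p ∣ n i := by
      rcases (hpp.dvd_mul.mp hpN) with h' | h'
      · rcases (hpp.dvd_mul.mp h') with h'' | h''
        · rcases (hpp.dvd_mul.mp h'') with h3 | h3
          exacts [⟨0, h3⟩, ⟨1, h3⟩]
        · exact ⟨2, h''⟩
      · exact ⟨3, h'⟩
    obtain ⟨i, hpi⟩ := this
    set m := n (i+1) with hm
    have hm1 : 1 ≤ m := orderOf_pos _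
    have h1 : p ∣ 2 ^ m - 1 := hpi.trans (hd i)
    have hte : 2 ^ m = 2 * 2 ^ (m - 1) := by
      rw [← pow_succ']; congr 1; omega
    have hodd : ¬ (2 ∣ 2 ^ m - 1) := by
      intro h2
      obtain ⟨k, hk⟩ := h2
      have h4 : 1 ≤ 2 ^ m := Nat.one_le_two_pow
      omega
    have hp2 : p ≠ 2 := fun he => hodd (he ▸ h1)
    have hz : ((2 : ZMod p)) ^ m = 1 := by
      have hc : ((2 ^ m - 1 : ℕ) : ZMod p) = 0 := (ZMod.natCast_eq_zero_iff _ p).mpr h1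
      have hc2 : ((2 ^ m : ℕ) : ZMod p) = 1 := by
        rw [show (2 ^ m : ℕ) = (2 ^ m - 1) + 1 by omega, Nat.cast_add, hc, Nat.cast_one, zero_add]
      rw [← hc2]; push_cast; ring
    set d := orderOf (2 : ZMod p) with hdd
    have hdm : d ∣ m := orderOf_dvd_of_pow_eq_one hz
    have h2ne1 : (2 : ZMod p) ≠ 1 := by
      intro he
      have h5 : (1 : ZMod p) = 0 := by linear_combination he
      exact one_ne_zero h5
    have hd1 : d ≠ 1 := fun he => h2ne1 (orderOf_eq_one_iff.mp he)
    have h2ne0 : (2 : ZMod p) ≠ 0 := by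
      intro he
      have h6 : p ∣ 2 := (ZMod.natCast_eq_zero_iff 2 p).mp (by exact_mod_cast he)
      exact hp2 ((Nat.prime_dvd_prime_iff_eq hpp Nat.prime_two).mp h6)
    have hdp : d ∣ p - 1 := orderOf_dvd_of_pow_eq_one (ZMod.pow_card_sub_one_eq_one h2ne0)
    have hqp : d.minFac.Prime := Nat.minFac_prime hd1
    set q := d.minFac with hq
    have hqd : q ∣ d := Nat.minFac_dvd d
    have hqN : q ∣ N := (hqd.trans hdm).trans (hnN (i+1))
    have hple : p ≤ q := Nat.minFac_le_of_dvd hqp.two_le hqN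
    have hqle : q ≤ p - 1 := Nat.le_of_dvd (by have := hpp.two_le; omega) (hqd.trans hdp)
    have := hpp.two_le
    omega
  intro i
  have : n i = 1 := Nat.dvd_one.mp (hN1 ▸ hnN i)
  exact orderOf_eq_one_iff.mp this





theorem coprod_lift_injective {ι : Type*} {H : Type*} [Group H] {G : ι → Type*}
    [∀ i, Group (G i)] {φ : ∀ i, H →* G i} (hφ : ∀ i, Function.Injective (φ i))
    {K : ι → Type*} [∀ i, Group (K i)] (f : ∀ i, K i →* G i)
    (hne : ∀ (i) (k : K i), k ≠ 1 → f i k ∉ Set.range (φ i)) :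
    Function.Injective (CoprodI.lift (fun i => (PushoutI.of (φ := φ) i).comp (f i))) := by
  classical
  set F := fun i => (PushoutI.of (φ := φ) i).comp (f i) with hF
  rw [injective_iff_map_eq_one]
  intro x hx
  set w := CoprodI.Word.equiv (M := K) x with hw
  have hxw : CoprodI.Word.prod w = x := CoprodI.Word.equiv.left_inv x
  have hfne : ∀ l ∈ w.toList, f l.1 l.2 ≠ 1 := by
    intro l hl h1
    exact hne l.1 l.2 (w.ne_one l hl) (h1 ▸ ⟨1, map_one _⟩)
  let w' : CoprodI.Word G := ⟨w.toList.map (fun l => ⟨l.1, f l.1 l.2⟩),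
    by
      intro l hl
      simp only [List.mem_map] at hl
      obtain ⟨l0, hl0, rfl⟩ := hl
      exact hfne l0 hl0,
    by
      rw [List.isChain_map]
      exact w.chain_ne⟩
  have hred : PushoutI.Reduced φ w' := by
    intro g hg
    simp only [w', List.mem_map] at hg
    obtain ⟨l0, hl0, rfl⟩ := hg
    intro hr
    exact hne l0.1 l0.2 (w.ne_one l0 hl0) hr
  have hprod : PushoutI.ofCoprodI w'.prod = CoprodI.lift F (CoprodI.Word.prod w) := by
    simp only [CoprodI.Word.prod, List.map_map, map_list_prod]
    congr 1
    simp only [w', List.map_map]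
    refine List.map_congr_left (fun l _ => ?_)
    simp [F, CoprodI.lift_of, PushoutI.ofCoprodI_of]
  have hmem : PushoutI.ofCoprodI w'.prod ∈ (PushoutI.base φ).range := by
    rw [hprod, hxw, hx]
    exact one_mem _
  have hempty := hred.eq_empty_of_mem_range hφ hmem
  have hnil : w.toList = [] := by
    have := congrArg CoprodI.Word.toList hempty
    simpa [w', CoprodI.Word.empty] using this
  have hwempty : w = CoprodI.Word.empty := by
    apply CoprodI.Word.ext
    simp [hnil, CoprodI.Word.empty]
  rw [← hxw, hwempty, CoprodI.Word.prod_empty]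





/-- relator of BS(1,2): b⁻¹ a b (a a)⁻¹ -/
def bsRel : Set (FreeGroup (Fin 2)) :=
  {(FreeGroup.of 1)⁻¹ * FreeGroup.of 0 * FreeGroup.of 1 * (FreeGroup.of 0 * FreeGroup.of 0)⁻¹}

abbrev BS : Type := PresentedGroup bsRel

def bsA : BS := PresentedGroup.of 0
def bsB : BS := PresentedGroup.of 1

lemma bs_rel : bsB⁻¹ * bsA * bsB = bsA * bsA := by
  have h : PresentedGroup.mk bsRel
      ((FreeGroup.of 1)⁻¹ * FreeGroup.of 0 * FreeGroup.of 1 *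
        (FreeGroup.of 0 * FreeGroup.of 0)⁻¹) = 1 := by
    apply (QuotientGroup.eq_one_iff _).mpr
    exact Subgroup.subset_normalClosure (by simp [bsRel])
  rw [map_mul, map_mul, map_mul, map_inv, map_inv, map_mul] at h
  exact mul_inv_eq_one.mp h

/-- permutation representation -/
def permA : Equiv.Perm ℚ := Equiv.addRight 1
def permB : Equiv.Perm ℚ := Equiv.mulRight₀ (2 : ℚ)⁻¹ (by norm_num)

lemma perm_rel : permA * permB = permB * (permA * permA) := by
  ext x
  simp [permA, permB, Equiv.Perm.mul_apply]
  ring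

lemma bs_lift_perm : ∀ r ∈ bsRel, FreeGroup.lift (![permA, permB] : Fin 2 → Equiv.Perm ℚ) r = 1 := by
  intro r hr
  simp only [bsRel, Set.mem_singleton_iff] at hr
  subst hr
  rw [map_mul, map_mul, map_mul, map_inv, map_inv, map_mul]
  simp only [FreeGroup.lift_apply_of, Matrix.cons_val_zero, Matrix.cons_val_one, Matrix.head_cons]
  rw [mul_inv_eq_one]
  calc permB⁻¹ * permA * permB = permB⁻¹ * (permA * permB) := by group
    _ = permB⁻¹ * (permB * (permA * permA)) := by rw [perm_rel]
    _ = permA * permA := by group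

def ρ : BS →* Equiv.Perm ℚ := PresentedGroup.toGroup bs_lift_perm

@[simp] lemma ρ_a : ρ bsA = permA := by
  simp [ρ, bsA, PresentedGroup.toGroup.of]

@[simp] lemma ρ_b : ρ bsB = permB := by
  simp [ρ, bsB, PresentedGroup.toGroup.of]

lemma bs_lift_int : ∀ r ∈ bsRel,
    FreeGroup.lift (![1, Multiplicative.ofAdd (1:ℤ)] : Fin 2 → Multiplicative ℤ) r = 1 := by
  intro r hr
  simp only [bsRel, Set.mem_singleton_iff] at hr
  subst hr
  rw [map_mul, map_mul, map_mul, map_inv, map_inv, map_mul]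
  simp only [FreeGroup.lift_apply_of, Matrix.cons_val_zero, Matrix.cons_val_one, Matrix.head_cons]
  group

def σ : BS →* Multiplicative ℤ := PresentedGroup.toGroup bs_lift_int

@[simp] lemma σ_a : σ bsA = 1 := by
  simp [σ, bsA, PresentedGroup.toGroup.of]

@[simp] lemma σ_b : σ bsB = Multiplicative.ofAdd (1:ℤ) := by
  simp [σ, bsB, PresentedGroup.toGroup.of]

lemma permA_pow (k : ℕ) : (permA ^ k) 0 = (k : ℚ) := by
  induction k with
  | zero => simp
  | succ k ih =>
    rw [pow_succ', Equiv.Perm.mul_apply, ih]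
    show (k:ℚ) + 1 = _
    push_cast
    ring

lemma permA_pow_ne_one {k : ℕ} (hk : k ≠ 0) : permA ^ k ≠ 1 := by
  intro h
  have := permA_pow k
  rw [h] at this
  simp at this
  exact hk (by exact_mod_cast this.symm)

lemma bs_a_zpow {n : ℤ} (h : bsA ^ n = 1) : n = 0 := by
  by_contra hn
  have hρ : permA ^ n = 1 := by
    have := congrArg ρ h
    rwa [map_zpow, ρ_a, map_one] at this
  have hnat : permA ^ n.natAbs = 1 := by
    rcases Int.natAbs_eq n with he | he
    · rw [he] at hρ; rwa [zpow_natCast] at hρ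
    · rw [he] at hρ
      rw [zpow_neg, zpow_natCast, inv_eq_one] at hρ
      exact hρ
  exact permA_pow_ne_one (by omega) hnat

lemma ofAdd_one_zpow {n : ℤ} (h : Multiplicative.ofAdd (1:ℤ) ^ n = 1) : n = 0 := by
  have h2 := congrArg Multiplicative.toAdd h
  rw [toAdd_zpow] at h2
  simpa using h2

lemma bs_b_zpow {n : ℤ} (h : bsB ^ n = 1) : n = 0 := by
  have h1 : Multiplicative.ofAdd (1:ℤ) ^ n = 1 := by
    simpa [map_zpow, σ_b] using congrArg σ h
  exact ofAdd_one_zpow h1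

/-- a^n = b^m forces n = m = 0 -/
lemma bs_ab {n m : ℤ} (h : bsA ^ n = bsB ^ m) : n = 0 ∧ m = 0 := by
  have hσ : Multiplicative.ofAdd (1:ℤ) ^ m = 1 := by
    simpa [map_zpow, σ_a, σ_b] using (congrArg σ h).symm
  have hm : m = 0 := ofAdd_one_zpow hσ
  subst hm
  rw [zpow_zero] at h
  exact ⟨bs_a_zpow h, rfl⟩



/-- base maps for the first amalgam: ℤ → BS onto ⟨b⟩ and ⟨a⟩ respectively -/
def φT : ∀ _ : Fin 2, Multiplicative ℤ →* BS :=
  ![zpowersHom BS bsB, zpowersHom BS bsA]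

abbrev T : Type := PushoutI φT

lemma zpowersHom_inj {G : Type*} [Group G] {g : G} (h : ∀ n : ℤ, g ^ n = 1 → n = 0) :
    Function.Injective (zpowersHom G g) := by
  rw [injective_iff_map_eq_one]
  intro m hm
  rw [zpowersHom_apply] at hm
  have := h _ hm
  exact Multiplicative.toAdd.injective (by simpa using this)

lemma hφT : ∀ i, Function.Injective (φT i) := by
  intro i
  fin_cases i
  · exact zpowersHom_inj (fun n h => bs_b_zpow h)
  · exact zpowersHom_inj (fun n h => bs_a_zpow h)

/-- the generators of T -/
def tX : T := PushoutI.of (φ := φT) 0 bsA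
def tY : T := PushoutI.of (φ := φT) 0 bsB
def tZ : T := PushoutI.of (φ := φT) 1 bsB

lemma tY_eq : tY = PushoutI.of (φ := φT) 1 bsA := by
  have h0 := PushoutI.of_apply_eq_base φT 0 (Multiplicative.ofAdd (1:ℤ))
  have h1 := PushoutI.of_apply_eq_base φT 1 (Multiplicative.ofAdd (1:ℤ))
  have e0 : φT 0 (Multiplicative.ofAdd (1:ℤ)) = bsB := by
    show zpowersHom BS bsB _ = bsB
    simp
  have e1 : φT 1 (Multiplicative.ofAdd (1:ℤ)) = bsA := by
    show zpowersHom BS bsA _ = bsA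
    simp
  rw [e0] at h0
  rw [e1] at h1
  rw [tY, h0, ← h1]

lemma t_rel1 : tY⁻¹ * tX * tY = tX * tX := by
  have := congrArg (PushoutI.of (φ := φT) 0) bs_rel
  simpa [map_mul, map_inv, tX, tY] using this

lemma t_rel2 : tZ⁻¹ * tY * tZ = tY * tY := by
  have := congrArg (PushoutI.of (φ := φT) 1) bs_rel
  rw [tY_eq]
  simpa [map_mul, map_inv, tZ] using this

lemma tX_ne_one : tX ≠ 1 := by
  intro h
  have hinj := PushoutI.of_injective hφT 0
  have : bsA = 1 := hinj (by simpa [tX] using h)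
  have : bsA ^ (1:ℤ) = 1 := by simpa using this
  exact one_ne_zero (bs_a_zpow this)




/-- exponent homomorphism on FreeGroup Unit -/
def expU : FreeGroup Unit →* Multiplicative ℤ :=
  FreeGroup.lift (fun _ => Multiplicative.ofAdd (1:ℤ))

lemma freeGroupUnit_eq (k : FreeGroup Unit) :
    k = FreeGroup.of () ^ (Multiplicative.toAdd (expU k)) := by
  have h : (zpowersHom (FreeGroup Unit) (FreeGroup.of ())).comp expU =
      MonoidHom.id (FreeGroup Unit) := by
    apply FreeGroup.ext_hom
    intro a
    simp [expU]
  have := congrArg (fun f : FreeGroup Unit →* FreeGroup Unit => f k) h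
  simpa [zpowersHom_apply] using this.symm

def fK : ∀ _ : Fin 2, FreeGroup Unit →* BS :=
  ![FreeGroup.lift (fun _ => bsA), FreeGroup.lift (fun _ => bsB)]

lemma fK_hne : ∀ (i : Fin 2) (k : FreeGroup Unit), k ≠ 1 → fK i k ∉ Set.range (φT i) := by
  intro i k hk
  set n := Multiplicative.toAdd (expU k) with hn
  have hkeq : k = FreeGroup.of () ^ n := freeGroupUnit_eq k
  have hn0 : n ≠ 0 := by
    intro h0
    apply hk
    rw [hkeq, h0, zpow_zero]
  have case0 : fK 0 k ∉ Set.range (φT 0) := by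
    rintro ⟨m, hm⟩
    have hfk : fK 0 k = bsA ^ n := by
      rw [hkeq, map_zpow]
      norm_num [fK]
    have hm' : zpowersHom BS bsB m = bsA ^ n := hm.trans hfk
    rw [zpowersHom_apply] at hm'
    exact hn0 (bs_ab hm'.symm).1
  have case1 : fK 1 k ∉ Set.range (φT 1) := by
    rintro ⟨m, hm⟩
    have hfk : fK 1 k = bsB ^ n := by
      rw [hkeq, map_zpow]
      norm_num [fK]
    have hm' : zpowersHom BS bsA m = bsB ^ n := hm.trans hfk
    rw [zpowersHom_apply] at hm'
    exact hn0 (bs_ab hm').2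
  fin_cases i
  exacts [case0, case1]

def Φ : FreeGroup (Fin 2) →* T :=
  (CoprodI.lift (fun i => (PushoutI.of (φ := φT) i).comp (fK i))).comp
    (freeGroupEquivCoprodI (ι := Fin 2)).toMonoidHom

lemma Φ_injective : Function.Injective Φ := by
  exact (coprod_lift_injective hφT fK fK_hne).comp (freeGroupEquivCoprodI (ι := Fin 2)).injective

lemma Φ_of_0 : Φ (FreeGroup.of 0) = tX := by
  simp only [Φ, MonoidHom.comp_apply, MulEquiv.coe_toMonoidHom, freeGroupEquivCoprodI_apply,
    FreeGroup.lift_apply_of, CoprodI.lift_of, MonoidHom.comp_apply]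
  norm_num [fK, tX]

lemma Φ_of_1 : Φ (FreeGroup.of 1) = tZ := by
  simp only [Φ, MonoidHom.comp_apply, MulEquiv.coe_toMonoidHom, freeGroupEquivCoprodI_apply,
    FreeGroup.lift_apply_of, CoprodI.lift_of, MonoidHom.comp_apply]
  norm_num [fK, tZ]

def Φ' : FreeGroup (Fin 2) →* T :=
  Φ.comp (FreeGroup.freeGroupCongr (Equiv.swap (0:Fin 2) 1)).toMonoidHom

lemma Φ'_injective : Function.Injective Φ' :=
  Φ_injective.comp (FreeGroup.freeGroupCongr _).injective

lemma Φ'_of_0 : Φ' (FreeGroup.of 0) = tZ := by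
  simp only [Φ', MonoidHom.comp_apply, MulEquiv.coe_toMonoidHom, FreeGroup.freeGroupCongr_apply,
    FreeGroup.map.of]
  rw [show (Equiv.swap (0:Fin 2) 1) 0 = 1 from by decide]
  exact Φ_of_1

lemma Φ'_of_1 : Φ' (FreeGroup.of 1) = tX := by
  simp only [Φ', MonoidHom.comp_apply, MulEquiv.coe_toMonoidHom, FreeGroup.freeGroupCongr_apply,
    FreeGroup.map.of]
  rw [show (Equiv.swap (0:Fin 2) 1) 1 = 0 from by decide]
  exact Φ_of_0


end WiseAux

namespace WiseAux

open Monoid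

def φ2 : ∀ _ : Fin 2, FreeGroup (Fin 2) →* T := ![Φ, Φ']

abbrev G2 : Type := PushoutI φ2

lemma hφ2 : ∀ i, Function.Injective (φ2 i) := by
  intro i; fin_cases i
  exacts [Φ_injective, Φ'_injective]

def gA : G2 := PushoutI.of (φ := φ2) 0 tX
def gB : G2 := PushoutI.of (φ := φ2) 0 tY
def gC : G2 := PushoutI.of (φ := φ2) 0 tZ
def gD : G2 := PushoutI.of (φ := φ2) 1 tY

lemma gA_eq : gA = PushoutI.of (φ := φ2) 1 tZ := by
  have h0 := PushoutI.of_apply_eq_base φ2 0 (FreeGroup.of 0)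
  have h1 := PushoutI.of_apply_eq_base φ2 1 (FreeGroup.of 0)
  have e0 : φ2 0 (FreeGroup.of 0) = tX := Φ_of_0
  have e1 : φ2 1 (FreeGroup.of 0) = tZ := Φ'_of_0
  rw [e0] at h0
  rw [e1] at h1
  rw [gA, h0, ← h1]

lemma gC_eq : gC = PushoutI.of (φ := φ2) 1 tX := by
  have h0 := PushoutI.of_apply_eq_base φ2 0 (FreeGroup.of 1)
  have h1 := PushoutI.of_apply_eq_base φ2 1 (FreeGroup.of 1)
  have e0 : φ2 0 (FreeGroup.of 1) = tZ := Φ_of_1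
  have e1 : φ2 1 (FreeGroup.of 1) = tX := Φ'_of_1
  rw [e0] at h0
  rw [e1] at h1
  rw [gC, h0, ← h1]

lemma grel1 : gB⁻¹ * gA * gB = gA * gA := by
  have := congrArg (PushoutI.of (φ := φ2) 0) t_rel1
  simpa [map_mul, map_inv, gA, gB] using this

lemma grel2 : gC⁻¹ * gB * gC = gB * gB := by
  have := congrArg (PushoutI.of (φ := φ2) 0) t_rel2
  simpa [map_mul, map_inv, gB, gC] using this

lemma grel3 : gD⁻¹ * gC * gD = gC * gC := by
  have := congrArg (PushoutI.of (φ := φ2) 1) t_rel1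
  rw [gC_eq]
  simpa [map_mul, map_inv, gD] using this

lemma grel4 : gA⁻¹ * gD * gA = gD * gD := by
  have := congrArg (PushoutI.of (φ := φ2) 1) t_rel2
  rw [gA_eq]
  simpa [map_mul, map_inv, gD] using this

lemma gA_ne_one : gA ≠ 1 := by
  intro h
  have hinj := PushoutI.of_injective hφ2 0
  have : tX = 1 := hinj (by simpa [gA] using h)
  exact tX_ne_one this

end WiseAux

namespace WiseAux

open Monoid

def hRel : Fin 4 → FreeGroup (Fin 4) := fun i =>
  (FreeGroup.of (i+1))⁻¹ * FreeGroup.of i * FreeGroup.of (i+1) *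
    (FreeGroup.of i * FreeGroup.of i)⁻¹

def hRels : Set (FreeGroup (Fin 4)) := Set.range hRel

abbrev Hig : Type := PresentedGroup hRels

def hGen : Fin 4 → Hig := fun i => PresentedGroup.of i

lemma hig_rel (i : Fin 4) : (hGen (i+1))⁻¹ * hGen i * hGen (i+1) = hGen i * hGen i := by
  have h : PresentedGroup.mk hRels (hRel i) = 1 := by
    apply (QuotientGroup.eq_one_iff _).mpr
    exact Subgroup.subset_normalClosure ⟨i, rfl⟩
  rw [hRel, map_mul, map_mul, map_mul, map_inv, map_inv, map_mul] at h
  exact mul_inv_eq_one.mp h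

lemma hig_finite_quot {Q : Type*} [Group Q] (hQ : Finite Q) (f : Hig →* Q) (g : Hig) :
    f g = 1 := by
  have hα : ∀ i : Fin 4,
      (f (hGen (i+1)))⁻¹ * f (hGen i) * f (hGen (i+1)) = f (hGen i) * f (hGen i) := by
    intro i
    have := congrArg f (hig_rel i)
    simpa [map_mul, map_inv] using this
  have hone := higman_finite (fun i => f (hGen i)) hα
  have : g ∈ f.ker :=
    PresentedGroup.generated_by hRels f.ker (fun j => by
      have := hone j
      simpa [MonoidHom.mem_ker, hGen] using this) g
  exact this

def higGen : Fin 4 → G2 := ![gA, gB, gC, gD]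

lemma hig_lift : ∀ r ∈ hRels, FreeGroup.lift higGen r = 1 := by
  rintro r ⟨i, rfl⟩
  rw [hRel, map_mul, map_mul, map_mul, map_inv, map_inv, map_mul]
  simp only [FreeGroup.lift_apply_of]
  fin_cases i
  · exact mul_inv_eq_one.mpr grel1
  · exact mul_inv_eq_one.mpr grel2
  · exact mul_inv_eq_one.mpr grel3
  · exact mul_inv_eq_one.mpr grel4

def ψ : Hig →* G2 := PresentedGroup.toGroup hig_lift

lemma hig_gen0_ne_one : hGen 0 ≠ 1 := by
  intro h
  apply gA_ne_one
  have := congrArg ψ h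
  rw [map_one] at this
  rw [← this]
  show gA = ψ (PresentedGroup.of 0)
  rw [ψ, PresentedGroup.toGroup.of]
  rfl

lemma hig_infinite : Infinite Hig := by
  rw [← not_finite_iff_infinite]
  intro hfin
  exact hig_gen0_ne_one (hig_finite_quot hfin (MonoidHom.id Hig) (hGen 0))

end WiseAux



/-- A group is finitely presented if it is isomorphic to a `PresentedGroup` on a finite
generating type with a finite set of relators. -/
def IsFinitelyPresented (G : Type*) [Group G] : Prop :=
  ∃ (k : ℕ) (rels : Set (FreeGroup (Fin k))), rels.Finite ∧
    Nonempty (G ≃* PresentedGroup rels)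

/-- **Wise's theorem** (group-theoretic content): there is a finitely presented infinite
group all of whose homomorphisms to finite groups are trivial. -/
theorem exists_fp_infinite_no_nontrivial_finite_quotients :
    ∃ (G : Type) (_ : Group G), IsFinitelyPresented G ∧ Infinite G ∧
      ∀ (Q : Type) (_ : Group Q), Finite Q → ∀ f : G →* Q, ∀ g : G, f g = 1 := by
  refine ⟨WiseAux.Hig, inferInstance,
    ⟨4, WiseAux.hRels, Set.finite_range _, ⟨MulEquiv.refl _⟩⟩,
    WiseAux.hig_infinite, ?_⟩
  intro Q _ hQ f g
  exact WiseAux.hig_finite_quot hQ f g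
end

section
/- The predicate on pairs (P, w), where P is a finite presentation and w is a word in the generators of P, asserting that the element of the group presented by P represented by w survives in a finite quotient, is recursively enumerable (REPred with respect to the encoding of such pairs). -/
/-- A finite presentation: a number of generators `k` together with a finite list of
relator words. A word is a list of letters `(i, b) : ℕ × Bool`, interpreted as the
generator `i` of `FreeGroup (Fin k)` (or its inverse when `b = false`) when `i < k`,
and as the identity otherwise. This plain (non-dependent) encoding makes the type of
presentations (and of presentation–word pairs) `Primcodable`, so Mathlib's computability
notions apply. -/
abbrev FinPres : Type := ℕ × List (List (ℕ × Bool))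

/-- The element of `FreeGroup (Fin k)` spelled by a single letter. -/
def presLetter (k : ℕ) (l : ℕ × Bool) : FreeGroup (Fin k) :=
  if h : l.1 < k then
    (cond l.2 (FreeGroup.of (⟨l.1, h⟩ : Fin k)) (FreeGroup.of (⟨l.1, h⟩ : Fin k))⁻¹)
  else 1

/-- The element of `FreeGroup (Fin k)` spelled by a word. -/
def presWord (k : ℕ) (w : List (ℕ × Bool)) : FreeGroup (Fin k) :=
  (w.map (presLetter k)).prod

/-- The set of relators of a finite presentation, as elements of the free group. -/
def presRels (P : FinPres) : Set (FreeGroup (Fin P.1)) :=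
  { g | ∃ w ∈ P.2, presWord P.1 w = g }

/-- The group presented by a finite presentation: the free group on `Fin k` modulo the
normal closure of the relators. -/
abbrev presGrp (P : FinPres) : Type := PresentedGroup (presRels P)

/-- The element of the presented group represented by a word in the generators. -/
def presElt (P : FinPres) (w : List (ℕ × Bool)) : presGrp P :=
  PresentedGroup.mk (presRels P) (presWord P.1 w)

/-- An element `g` of a group survives in a finite quotient if some homomorphism to a
finite group does not kill it. -/
def SurvivesInFiniteQuotient {G : Type*} [Group G] (g : G) : Prop :=
  ∃ (Q : Type) (_ : Group Q) (_ : Finite Q) (f : G →* Q), f g ≠ 1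


namespace ReSurvive

/-- composition of list-coded maps: apply `f` then `g`. -/
def pcomp (f g : List ℕ) : List ℕ := f.map fun j => g.getD j 0

def idL (m : ℕ) : List ℕ := List.range m

def toL {m : ℕ} (p : Equiv.Perm (Fin m)) : List ℕ :=
  (List.finRange m).map fun j => (p j : ℕ)

@[simp] lemma length_toL {m : ℕ} (p : Equiv.Perm (Fin m)) : (toL p).length = m := by
  simp [toL]

@[simp] lemma length_idL (m : ℕ) : (idL m).length = m := by simp [idL]

lemma getD_toL {m : ℕ} (p : Equiv.Perm (Fin m)) (j : Fin m) :
    (toL p).getD (j : ℕ) 0 = p j := by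
  rw [List.getD_eq_getElem _ _ (by simp [j.isLt])]
  simp [toL]

lemma getD_idL {m j : ℕ} (h : j < m) : (idL m).getD j 0 = j := by
  rw [List.getD_eq_getElem _ _ (by simpa [idL] using h)]
  simp [idL]

@[simp] lemma toL_one {m : ℕ} : toL (1 : Equiv.Perm (Fin m)) = idL m := by
  refine List.ext_getElem (by simp) fun i h1 h2 => ?_
  simp [toL, idL]

lemma mem_toL_lt {m : ℕ} {p : Equiv.Perm (Fin m)} {x : ℕ} (hx : x ∈ toL p) : x < m := by
  simp only [toL, List.mem_map] at hx
  obtain ⟨j, -, rfl⟩ := hx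
  exact (p j).isLt

lemma toL_mul {m : ℕ} (p q : Equiv.Perm (Fin m)) :
    toL (p * q) = pcomp (toL q) (toL p) := by
  simp only [pcomp, toL, List.map_map]
  refine List.map_congr_left fun j _ => ?_
  simp only [Function.comp]
  rw [show (List.map (fun j => (↑(p j) : ℕ)) (List.finRange m)) = toL p from rfl, getD_toL]
  rfl

lemma toL_injective {m : ℕ} : Function.Injective (toL (m := m)) := by
  intro p q h
  ext j
  have := congrArg (fun l => l.getD (j : ℕ) 0) h
  simp only [getD_toL] at this
  exact this

def letterL (m : ℕ) (L : List (List ℕ × List ℕ)) (l : ℕ × Bool) : List ℕ :=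
  cond l.2 (L.getD l.1 (idL m, idL m)).1 (L.getD l.1 (idL m, idL m)).2

def evalW (m : ℕ) (L : List (List ℕ × List ℕ)) (w : List (ℕ × Bool)) : List ℕ :=
  w.foldl (fun acc l => pcomp (letterL m L l) acc) (idL m)

lemma presWord_cons (k : ℕ) (l : ℕ × Bool) (w : List (ℕ × Bool)) :
    presWord k (l :: w) = presLetter k l * presWord k w := by
  simp [presWord]

lemma evalW_eq {k m : ℕ} {L : List (List ℕ × List ℕ)} {f : Fin k → Equiv.Perm (Fin m)}
    (hl : ∀ l : ℕ × Bool, letterL m L l = toL (FreeGroup.lift f (presLetter k l)))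
    (w : List (ℕ × Bool)) :
    evalW m L w = toL (FreeGroup.lift f (presWord k w)) := by
  suffices h : ∀ p : Equiv.Perm (Fin m),
      w.foldl (fun acc l => pcomp (letterL m L l) acc) (toL p)
        = toL (p * FreeGroup.lift f (presWord k w)) by
    simpa [evalW, toL_one] using h 1
  induction w with
  | nil => intro p; simp [presWord]
  | cons l w ih =>
    intro p
    rw [List.foldl_cons, hl l, ← toL_mul, ih, presWord_cons, map_mul, mul_assoc]

/-- `okPair` checks that a pair of lists codes a permutation of `Fin m` and its inverse. -/
def okPair (m : ℕ) (st : List ℕ × List ℕ) : Bool :=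
  (decide (st.1.length = m) && decide (st.2.length = m)) &&
  ((decide (pcomp st.1 (idL m) = st.1) && decide (pcomp st.2 (idL m) = st.2)) &&
  (decide (pcomp st.1 st.2 = idL m) && decide (pcomp st.2 st.1 = idL m)))

def check (a : FinPres × List (ℕ × Bool)) (c : ℕ × List (List ℕ × List ℕ)) : Bool :=
  (decide (c.2.length = a.1.1) && c.2.foldl (fun b st => b && okPair c.1 st) true) &&
  ((a.1.2.foldl (fun b r => b && decide (evalW c.1 c.2 r = idL c.1)) true) &&
   !decide (evalW c.1 c.2 a.2 = idL c.1))

lemma foldl_and {β : Type*} (p : β → Bool) (l : List β) (b : Bool) :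
    l.foldl (fun b x => b && p x) b = (b && l.all p) := by
  induction l generalizing b with
  | nil => simp
  | cons x l ih => simp [ih, Bool.and_assoc]

lemma foldl_and_eq_true {β : Type*} {p : β → Bool} {l : List β} :
    l.foldl (fun b x => b && p x) true = true ↔ ∀ x ∈ l, p x = true := by
  simp [foldl_and]

/-- Transporting permutations along an equivalence, as a group homomorphism. -/
def permMap {β γ : Type*} (e : β ≃ γ) : Equiv.Perm β →* Equiv.Perm γ where
  toFun p := (e.symm.trans p).trans e
  map_one' := by ext x; simp
  map_mul' p q := by ext x; simp

lemma mk_rels_eq_one {α : Type*} {rels : Set (FreeGroup α)} {r : FreeGroup α} (hr : r ∈ rels) :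
    PresentedGroup.mk rels r = 1 :=
  (QuotientGroup.eq_one_iff r).2 (Subgroup.subset_normalClosure hr)

lemma pcomp_idL_right {m : ℕ} {s : List ℕ} (hs : ∀ x ∈ s, x < m) :
    pcomp s (idL m) = s := by
  conv_rhs => rw [← List.map_id s]
  exact List.map_congr_left fun x hx => getD_idL (hs x hx)

lemma getD_pcomp {s t : List ℕ} {j : ℕ} (h : j < s.length) :
    (pcomp s t).getD j 0 = t.getD (s.getD j 0) 0 := by
  rw [List.getD_eq_getElem _ _ (by simpa [pcomp] using h), List.getD_eq_getElem _ _ h]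
  simp [pcomp]

lemma entries_lt {m : ℕ} {s : List ℕ} (hl : s.length = m) (hs : pcomp s (idL m) = s) :
    ∀ x ∈ s, x < m := by
  intro x hx
  obtain ⟨i, hi, rfl⟩ := List.mem_iff_getElem.1 hx
  by_contra hge
  push_neg at hge
  have h0 : (idL m).getD s[i] 0 = 0 :=
    List.getD_eq_default _ _ (by simpa using hge)
  have := congrArg (fun l => l.getD i 0) hs
  rw [getD_pcomp hi, List.getD_eq_getElem _ _ hi, h0] at this
  omega

lemma okPair_perm {m : ℕ} {st : List ℕ × List ℕ} (h : okPair m st = true) :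
    ∃ p : Equiv.Perm (Fin m), toL p = st.1 ∧ toL p⁻¹ = st.2 := by
  simp only [okPair, Bool.and_eq_true, decide_eq_true_eq] at h
  obtain ⟨⟨h1, h2⟩, ⟨h3, h4⟩, ⟨h5, h6⟩⟩ := h
  have e1 := entries_lt h1 h3
  have e2 := entries_lt h2 h4
  have hu : ∀ j : Fin m, st.1.getD (j : ℕ) 0 < m := fun j => by
    rw [List.getD_eq_getElem _ _ (by omega : (j : ℕ) < st.1.length)]
    exact e1 _ (List.getElem_mem _)
  have hv : ∀ j : Fin m, st.2.getD (j : ℕ) 0 < m := fun j => by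
    rw [List.getD_eq_getElem _ _ (by omega : (j : ℕ) < st.2.length)]
    exact e2 _ (List.getElem_mem _)
  refine ⟨⟨fun j => ⟨st.1.getD (j : ℕ) 0, hu j⟩, fun j => ⟨st.2.getD (j : ℕ) 0, hv j⟩,
    ?_, ?_⟩, ?_, ?_⟩
  · intro j
    have := congrArg (fun l => l.getD (j : ℕ) 0) h5
    rw [getD_pcomp (by omega : (j : ℕ) < st.1.length), getD_idL j.isLt] at this
    exact Fin.ext this
  · intro j
    have := congrArg (fun l => l.getD (j : ℕ) 0) h6
    rw [getD_pcomp (by omega : (j : ℕ) < st.2.length), getD_idL j.isLt] at this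
    exact Fin.ext this
  · refine List.ext_getElem (by simp [h1]) fun i hi hi' => ?_
    simp only [toL, List.getElem_map, List.getElem_finRange, Equiv.coe_fn_mk, Fin.coe_cast]
    rw [List.getD_eq_getElem _ _ hi']
  · refine List.ext_getElem (by simp [h2]) fun i hi hi' => ?_
    simp only [toL, List.getElem_map, List.getElem_finRange]
    simp only [Equiv.Perm.inv_def, Equiv.coe_fn_symm_mk, Fin.coe_cast]
    rw [List.getD_eq_getElem _ _ hi']

lemma check_iff (P : FinPres) (w : List (ℕ × Bool)) :
    SurvivesInFiniteQuotient (presElt P w) ↔ ∃ c, check (P, w) c = true := by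
  constructor
  · rintro ⟨Q, _, _, φ, hφ⟩
    haveI : Fintype Q := Fintype.ofFinite Q
    set m := Nat.card Q with hm
    let e : Q ≃ Fin m := Finite.equivFin Q
    let χ : presGrp P →* Equiv.Perm (Fin m) :=
      (permMap e).comp ((MulAction.toPermHom Q Q).comp φ)
    have hχ : χ (presElt P w) ≠ 1 := by
      intro h
      apply hφ
      have := congrArg (fun p : Equiv.Perm (Fin m) => e.symm (p (e 1))) h
      simpa [χ, permMap, MulAction.toPermHom] using this
    set k := P.1 with hk
    let f : Fin k → Equiv.Perm (Fin m) := fun i => χ (PresentedGroup.of i)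
    have hlift : ∀ x : FreeGroup (Fin k),
        FreeGroup.lift f x = χ (PresentedGroup.mk (presRels P) x) := fun x =>
      (FreeGroup.lift_unique (χ.comp (PresentedGroup.mk (presRels P)))
        (fun i => rfl)).symm
    let L : List (List ℕ × List ℕ) :=
      (List.finRange k).map fun i => (toL (f i), toL (f i)⁻¹)
    have hletter : ∀ l : ℕ × Bool,
        letterL m L l = toL (FreeGroup.lift f (presLetter k l)) := by
      rintro ⟨i, b⟩
      by_cases h : i < k
      · have hgd : L[i]? = some (toL (f ⟨i, h⟩), toL (f ⟨i, h⟩)⁻¹) := by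
          rw [List.getElem?_eq_getElem (by simp [L, h])]
          simp [L]
        cases b <;>
          simp [letterL, List.getD, hgd, presLetter, h, map_inv]
      · have hgd : L[i]? = none := List.getElem?_eq_none (by simp [L]; omega)
        cases b <;>
          simp [letterL, List.getD, hgd, presLetter, h]
    refine ⟨(m, L), ?_⟩
    simp only [check, Bool.and_eq_true, decide_eq_true_eq, foldl_and_eq_true,
      Bool.not_eq_true', decide_eq_false_iff_not, ne_eq]
    refine ⟨⟨by simp [L]; exact hk, ?_⟩, ?_, ?_⟩
    · intro st hst
      simp only [L, List.mem_map] at hst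
      obtain ⟨i, -, rfl⟩ := hst
      have e1 : ∀ x ∈ toL (f i), x < m := fun x hx => mem_toL_lt hx
      have e2 : ∀ x ∈ toL (f i)⁻¹, x < m := fun x hx => mem_toL_lt hx
      simp only [okPair, Bool.and_eq_true, decide_eq_true_eq]
      refine ⟨⟨by simp, by simp⟩, ⟨pcomp_idL_right e1, pcomp_idL_right e2⟩, ?_, ?_⟩
      · rw [← toL_mul, inv_mul_cancel, toL_one]
      · rw [← toL_mul, mul_inv_cancel, toL_one]
    · intro r hr
      rw [evalW_eq hletter r, hlift,
        mk_rels_eq_one (show presWord k r ∈ presRels P from ⟨r, hr, rfl⟩), map_one, toL_one]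
    · rw [evalW_eq hletter w, hlift]
      intro hcon
      refine hχ (toL_injective ?_)
      rw [toL_one]
      exact hcon
  · rintro ⟨⟨m, L⟩, hc⟩
    simp only [check, Bool.and_eq_true, decide_eq_true_eq, foldl_and_eq_true,
      Bool.not_eq_true', decide_eq_false_iff_not, ne_eq] at hc
    obtain ⟨⟨hlen, hok⟩, hrel, hw⟩ := hc
    set k := P.1 with hk
    have H : ∀ i : Fin k, ∃ p : Equiv.Perm (Fin m),
        toL p = (L.getD (i : ℕ) ([], [])).1 ∧ toL p⁻¹ = (L.getD (i : ℕ) ([], [])).2 := by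
      intro i
      have hilt : (i : ℕ) < L.length := by omega
      have : L.getD (i : ℕ) ([], []) ∈ L := by
        rw [List.getD_eq_getElem _ _ hilt]
        exact List.getElem_mem _
      exact okPair_perm (hok _ this)
    choose f hf1 hf2 using H
    have hletter : ∀ l : ℕ × Bool,
        letterL m L l = toL (FreeGroup.lift f (presLetter k l)) := by
      rintro ⟨i, b⟩
      by_cases h : i < k
      · have hilt : i < L.length := by omega
        have hgd : L.getD i (idL m, idL m) = L.getD i ([], []) := by
          rw [List.getD_eq_getElem _ _ hilt, List.getD_eq_getElem _ _ hilt]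
        have hpl : ∀ b : Bool, presLetter k (i, b)
            = cond b (FreeGroup.of (⟨i, h⟩ : Fin k)) (FreeGroup.of (⟨i, h⟩ : Fin k))⁻¹ := by
          intro b; simp [presLetter, h]
        cases b
        · show (L.getD i (idL m, idL m)).2 = _
          rw [hgd, ← hf2 ⟨i, h⟩, hpl]
          simp
        · show (L.getD i (idL m, idL m)).1 = _
          rw [hgd, ← hf1 ⟨i, h⟩, hpl]
          simp
      · have hgd : L[i]? = none := List.getElem?_eq_none (by omega)
        cases b <;>
          simp [letterL, List.getD, hgd, presLetter, h]
    have hhom : ∀ r ∈ presRels P, FreeGroup.lift f r = 1 := by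
      rintro r ⟨wr, hwr, rfl⟩
      apply toL_injective
      rw [← evalW_eq hletter, hrel wr hwr, toL_one]
    refine ⟨Equiv.Perm (Fin m), inferInstance, inferInstance,
      PresentedGroup.toGroup hhom, ?_⟩
    intro hcon
    apply hw
    have h1 : FreeGroup.lift f (presWord k w) = 1 := hcon
    rw [evalW_eq hletter, h1, toL_one]

section Computability

open Primrec

lemma primrec_pcomp : Primrec₂ pcomp :=
  (Primrec.list_map Primrec.fst
    (((Primrec.list_getD 0).comp (Primrec.snd.comp Primrec.fst) Primrec.snd).to₂)).to₂

lemma primrec_idL : Primrec idL := Primrec.list_range.of_eq fun _ => rfl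

lemma primrec_okPair : Primrec₂ okPair := by
  have hand : Primrec₂ (· && ·) := Primrec.dom_bool₂ _
  have h1 : Primrec fun a : ℕ × (List ℕ × List ℕ) => decide (a.2.1.length = a.1) :=
    (Primrec.eq.comp (Primrec.list_length.comp (fst.comp snd)) fst).decide
  have h2 : Primrec fun a : ℕ × (List ℕ × List ℕ) => decide (a.2.2.length = a.1) :=
    (Primrec.eq.comp (Primrec.list_length.comp (snd.comp snd)) fst).decide
  have h3 : Primrec fun a : ℕ × (List ℕ × List ℕ) =>
      decide (pcomp a.2.1 (idL a.1) = a.2.1) :=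
    (Primrec.eq.comp (primrec_pcomp.comp (fst.comp snd) (primrec_idL.comp fst))
      (fst.comp snd)).decide
  have h4 : Primrec fun a : ℕ × (List ℕ × List ℕ) =>
      decide (pcomp a.2.2 (idL a.1) = a.2.2) :=
    (Primrec.eq.comp (primrec_pcomp.comp (snd.comp snd) (primrec_idL.comp fst))
      (snd.comp snd)).decide
  have h5 : Primrec fun a : ℕ × (List ℕ × List ℕ) =>
      decide (pcomp a.2.1 a.2.2 = idL a.1) :=
    (Primrec.eq.comp (primrec_pcomp.comp (fst.comp snd) (snd.comp snd))
      (primrec_idL.comp fst)).decide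
  have h6 : Primrec fun a : ℕ × (List ℕ × List ℕ) =>
      decide (pcomp a.2.2 a.2.1 = idL a.1) :=
    (Primrec.eq.comp (primrec_pcomp.comp (snd.comp snd) (fst.comp snd))
      (primrec_idL.comp fst)).decide
  exact ((hand.comp (hand.comp h1 h2) (hand.comp (hand.comp h3 h4) (hand.comp h5 h6))).to₂ :)

lemma primrec_letterL :
    Primrec₂ (fun (c : ℕ × List (List ℕ × List ℕ)) (l : ℕ × Bool) =>
      letterL c.1 c.2 l) := by
  have hget : Primrec fun a : (ℕ × List (List ℕ × List ℕ)) × (ℕ × Bool) =>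
      (a.1.2[a.2.1]?).getD (idL a.1.1, idL a.1.1) :=
    Primrec.option_getD.comp
      (Primrec.list_getElem?.comp (snd.comp fst) (fst.comp snd))
      ((primrec_idL.comp (fst.comp fst)).pair (primrec_idL.comp (fst.comp fst)))
  refine (Primrec.cond (snd.comp snd) (fst.comp hget) (snd.comp hget)).to₂.of_eq ?_
  rintro ⟨m, L⟩ ⟨i, b⟩
  simp [letterL, List.getD_eq_getElem?_getD]

lemma primrec_evalW :
    Primrec fun a : (ℕ × List (List ℕ × List ℕ)) × List (ℕ × Bool) =>
      evalW a.1.1 a.1.2 a.2 := by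
  have hstep : Primrec₂ fun (a : (ℕ × List (List ℕ × List ℕ)) × List (ℕ × Bool))
      (p : List ℕ × (ℕ × Bool)) => pcomp (letterL a.1.1 a.1.2 p.2) p.1 :=
    (primrec_pcomp.comp (primrec_letterL.comp (fst.comp fst) (snd.comp snd))
      (fst.comp snd)).to₂
  exact (Primrec.list_foldl snd (primrec_idL.comp (fst.comp fst)) hstep).of_eq
    fun a => rfl

set_option maxHeartbeats 1000000 in
lemma primrec_check : Primrec₂ check := by
  have hand : Primrec₂ (· && ·) := Primrec.dom_bool₂ _
  have hA : Primrec fun x : (FinPres × List (ℕ × Bool)) × (ℕ × List (List ℕ × List ℕ)) =>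
      decide (x.2.2.length = x.1.1.1) :=
    (Primrec.eq.comp (Primrec.list_length.comp (snd.comp snd)) (fst.comp (fst.comp fst))).decide
  have hB : Primrec fun x : (FinPres × List (ℕ × Bool)) × (ℕ × List (List ℕ × List ℕ)) =>
      x.2.2.foldl (fun b st => b && okPair x.2.1 st) true :=
    Primrec.list_foldl (snd.comp snd) (const true)
      ((hand.comp (fst.comp snd)
        (primrec_okPair.comp (fst.comp (snd.comp fst)) (snd.comp snd))).to₂)
  have hC : Primrec fun x : (FinPres × List (ℕ × Bool)) × (ℕ × List (List ℕ × List ℕ)) =>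
      x.1.1.2.foldl (fun b r => b && decide (evalW x.2.1 x.2.2 r = idL x.2.1)) true :=
    Primrec.list_foldl (snd.comp (fst.comp fst)) (const true)
      ((hand.comp (fst.comp snd)
        ((Primrec.eq.comp
          (primrec_evalW.comp ((snd.comp fst).pair (snd.comp snd)))
          (primrec_idL.comp (fst.comp (snd.comp fst)))).decide)).to₂)
  have hD : Primrec fun x : (FinPres × List (ℕ × Bool)) × (ℕ × List (List ℕ × List ℕ)) =>
      !decide (evalW x.2.1 x.2.2 x.1.2 = idL x.2.1) :=
    Primrec.not.comp
      ((Primrec.eq.comp (primrec_evalW.comp (snd.pair (snd.comp fst)))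
        (primrec_idL.comp (fst.comp snd))).decide)
  exact ((hand.comp (hand.comp hA hB) (hand.comp hC hD)).to₂ :)

end Computability

end ReSurvive

open ReSurvive

/-- Semidecidability step in the proof of Theorem 3.8: the predicate on pairs `(P, w)`
of a finite presentation and a word in its generators, asserting that the element of the
presented group represented by `w` survives in some finite quotient, is recursively
enumerable. -/
theorem rePred_survives :
    REPred (fun pw : FinPres × List (ℕ × Bool) =>
      SurvivesInFiniteQuotient (presElt pw.1 pw.2)) := by
  have hq : Computable₂ (fun (a : FinPres × List (ℕ × Bool)) (n : ℕ) =>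
      ((Encodable.decode (α := ℕ × List (List ℕ × List ℕ)) n).map (check a)).getD false) :=
    Computable.option_getD
      (Computable.option_map (Computable.decode.comp Computable.snd)
        (((primrec_check.to_comp).comp (Computable.fst.comp Computable.fst)
          Computable.snd).to₂))
      (Computable.const false)
  have hpart := Partrec.rfind hq.partrec₂
  refine hpart.dom_re.of_eq fun a => ?_
  obtain ⟨P, w⟩ := a
  rw [check_iff]
  constructor
  · intro h
    obtain ⟨n, hn, -⟩ := Nat.rfind_dom.1 h
    simp only [PFun.coe_val, Part.mem_some_iff] at hn
    rcases hdec : (Encodable.decode (α := ℕ × List (List ℕ × List ℕ)) n) with _ | c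
    · rw [hdec] at hn; simp at hn
    · rw [hdec] at hn
      simp only [Option.map_some, Option.getD_some] at hn
      exact ⟨c, hn.symm⟩
  · rintro ⟨c, hc⟩
    rw [Nat.rfind_dom]
    refine ⟨Encodable.encode c, ?_, fun {_} _ => trivial⟩
    have hdec : (Encodable.decode (α := ℕ × List (List ℕ × List ℕ))
        (Encodable.encode c)) = some c := Encodable.encodek c
    simp only [PFun.coe_val, Part.mem_some_iff, hdec, Option.map_some, Option.getD_some]
    exact hc.symm
end
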